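/- If Y is a subspace of a Tychonoff cube [0,1]^A such that for every countable B ⊆ A the canonical projection π_B : [0,1]^A → [0,1]^B maps Y onto all of [0,1]^B, then Y is pseudocompact. -/

import Mathlib

open Filter Topology Set

theorem projections_onto_implies_pseudocompact (A : Type*)
    (Y : Set (A → unitInterval))
    (h : ∀ B : Set A, B.Countable → ∀ h0 : B → unitInterval,
      ∃ y ∈ Y, ∀ b : B, y ↑b = h0 b) :
    ∀ g : C(Y, ℝ), ∃ M, ∀ y : Y, |g y| ≤ M := by
  classical
  intro g
  by_contra hM
  push_neg at hM
  choose y hy using fun n : ℕ => hM n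
  have habs : ∀ n : ℕ, IsOpen {w : Y | (n : ℝ) < |g w|} := fun n =>
    isOpen_lt continuous_const g.continuous.abs
  have hamb : ∀ n : ℕ, ∃ O : Set (A → unitInterval), IsOpen O ∧
      Subtype.val ⁻¹' O = {w : Y | (n : ℝ) < |g w|} := by
    intro n
    rcases isOpen_induced_iff.mp (habs n) with ⟨O, hO, hOeq⟩
    exact ⟨O, hO, hOeq⟩
  choose O hOopen hOeq using hamb
  have hyO : ∀ n, (y n : A → unitInterval) ∈ O n := by
    intro n
    have : y n ∈ Subtype.val ⁻¹' O n := by rw [hOeq n]; exact hy n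
    exact this
  have hbasic : ∀ n, ∃ (F : Finset A) (u : A → Set unitInterval),
      (∀ a ∈ F, IsOpen (u a) ∧ (y n : A → unitInterval) a ∈ u a) ∧
      (F : Set A).pi u ⊆ O n := fun n =>
    (isOpen_pi_iff.mp (hOopen n)) _ (hyO n)
  choose F u hFu hFsub using hbasic
  set B : Set A := ⋃ n, (F n : Set A) with hB
  have hBc : B.Countable := countable_iUnion fun n => (F n).countable_toSet
  set q : ℕ → (B → unitInterval) := fun n b => (y n : A → unitInterval) b with hq
  obtain ⟨p, -, hp⟩ := (isCompact_univ : IsCompact (univ : Set (B → unitInterval))).exists_clusterPt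
    (f := Filter.map q Filter.atTop) (le_principal_iff.mpr univ_mem)
  obtain ⟨y0, hy0Y, hy0⟩ := h B hBc p
  set c : ℝ := |g ⟨y0, hy0Y⟩| with hc
  set n : ℕ := ⌈c⌉₊ + 1 with hn
  have hcn : c < (n : ℝ) := lt_of_le_of_lt (Nat.le_ceil c)
    (by exact_mod_cast Nat.lt_succ_self _)
  have hopen' : IsOpen {w : Y | |g w| < (n : ℝ)} :=
    isOpen_lt g.continuous.abs continuous_const
  rcases isOpen_induced_iff.mp hopen' with ⟨O', hO', hO'eq⟩
  have hy0O' : y0 ∈ O' := by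
    have : (⟨y0, hy0Y⟩ : Y) ∈ Subtype.val ⁻¹' O' := by rw [hO'eq]; exact hcn
    exact this
  obtain ⟨F', u', hFu', hFsub'⟩ := isOpen_pi_iff.mp hO' y0 hy0O'
  set W : Set (B → unitInterval) := {r | ∀ b : B, (b : A) ∈ F' → r b ∈ u' b} with hW
  have hWopen : IsOpen W := by
    have hWeq : W = Set.pi {b : B | (b : A) ∈ F'} (fun b => u' b) := by
      ext r; simp [hW, Set.mem_pi]
    rw [hWeq]
    refine isOpen_set_pi ?_ ?_
    · exact Set.Finite.preimage Subtype.val_injective.injOn F'.finite_toSet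
    · intro b hb; exact (hFu' b hb).1
  have hpW : p ∈ W := by
    intro b hb
    rw [← hy0 b]
    exact (hFu' b hb).2
  have hWnhds : W ∈ 𝓝 p := hWopen.mem_nhds hpW
  have hfreq : ∃ m ≥ n, q m ∈ W := by
    have hmcp : MapClusterPt p Filter.atTop q := hp
    have hfr := mapClusterPt_iff_frequently.mp hmcp W hWnhds
    exact Filter.frequently_atTop.mp hfr n
  obtain ⟨m, hmn, hqm⟩ := hfreq
  set B' : Set A := B ∪ (F' : Set A) with hB'
  have hB'c : B'.Countable := hBc.union F'.countable_toSet
  obtain ⟨z, hzY, hz⟩ := h B' hB'c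
    (fun b => if hb : (b : A) ∈ B then (y m : A → unitInterval) ↑b else y0 b)
  have hz1 : ∀ a ∈ F m, z a ∈ u m a := by
    intro a ha
    have haB : a ∈ B := mem_iUnion.mpr ⟨m, ha⟩
    have haB' : a ∈ B' := Or.inl haB
    have hza := hz ⟨a, haB'⟩
    simp only [dif_pos haB] at hza
    rw [hza]
    exact (hFu m a ha).2
  have hzOm : z ∈ O m := hFsub m (Set.mem_pi.mpr hz1)
  have hgz1 : (m : ℝ) < |g ⟨z, hzY⟩| := by
    have hmem : (⟨z, hzY⟩ : Y) ∈ Subtype.val ⁻¹' O m := hzOm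
    rw [hOeq m] at hmem; exact hmem
  have hz2 : ∀ a ∈ F', z a ∈ u' a := by
    intro a ha
    have haB' : a ∈ B' := Or.inr ha
    have hza := hz ⟨a, haB'⟩
    by_cases haB : a ∈ B
    · simp only [dif_pos haB] at hza
      rw [hza]
      exact hqm ⟨a, haB⟩ ha
    · simp only [dif_neg haB] at hza
      rw [hza]
      exact (hFu' a ha).2
  have hzO' : z ∈ O' := hFsub' (Set.mem_pi.mpr hz2)
  have hgz2 : |g ⟨z, hzY⟩| < (n : ℝ) := by
    have hmem : (⟨z, hzY⟩ : Y) ∈ Subtype.val ⁻¹' O' := hzO'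
    rw [hO'eq] at hmem; exact hmem
  have hnm : (n : ℝ) ≤ (m : ℝ) := Nat.cast_le.mpr hmn
  linarith
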